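/- Fix n ≥ 2 and let P be the generic matrix with first row and first column equal to 1: the n×n matrix over ℤ[X_{k,l} : 1 ≤ k,l ≤ n] with P_{k,l} = X_{k,l} when k ≠ 1 and l ≠ 1, and P_{k,l} = 1 when k = 1 or l = 1. Let σ be a permutation of {1,…,n} with σ(1) ≠ 1, and set t = σ^{−1}(1). Then the coefficient of the monomial m_σ = Π_{k ≠ 1, σ(k) ≠ 1} X_{k,σ(k)} in the polynomial (−1)^{1+σ(1)}·det(P⟨1,σ(1)⟩) + (−1)^{t+1}·det(P⟨t,1⟩) + (−1)^{t+σ(1)}·det(P⟨t,σ(1)⟩) equals sign(σ), where P⟨a,b⟩ denotes the (n−1)×(n−1) minor of P obtained by deleting row a and column b. (The monomial m_σ occurs in each of the three cofactor terms, twice with sign equal to sign(σ) and once with sign −sign(σ).) -/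

import Mathlib

open MvPolynomial Finset

theorem Equiv.Perm.apply_inv_self {α : Type*} (f : Equiv.Perm α) (x : α) : f (f⁻¹ x) = x :=
  Equiv.apply_symm_apply f x

theorem Equiv.Perm.inv_apply_self {α : Type*} (f : Equiv.Perm α) (x : α) : f⁻¹ (f x) = x :=
  Equiv.symm_apply_apply f x

lemma prod_X_eq_monomial {ι κ : Type*} [DecidableEq κ] (s : Finset ι) (f : ι → κ) :
    (∏ i ∈ s, (X (f i) : MvPolynomial κ ℤ)) =
      monomial (∑ i ∈ s, Finsupp.single (f i) 1) 1 := by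
  induction s using Finset.cons_induction with
  | empty => simp [monomial_zero']
  | cons a s ha ih =>
      rw [Finset.prod_cons, Finset.sum_cons, ih, X, monomial_mul, one_mul]

lemma evalA {N : ℕ} (s : Finset (Fin N)) (f : Fin N → Fin N) (x l : Fin N) :
    (∑ i ∈ s, Finsupp.single ((f i, i) : Fin N × Fin N) (1 : ℕ)) (x, l) =
      if l ∈ s ∧ f l = x then 1 else 0 := by
  rw [Finsupp.finset_sum_apply]
  have h : ∀ i, (Finsupp.single ((f i, i) : Fin N × Fin N) (1 : ℕ)) (x, l)
      = if i = l then (if f l = x then 1 else 0) else 0 := by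
    intro i
    rw [Finsupp.single_apply]
    by_cases hil : i = l
    · subst hil; simp [Prod.ext_iff, eq_comm, and_comm]
    · simp [Prod.ext_iff, hil]
  simp_rw [h]
  rw [Finset.sum_ite_eq' s l, ite_and]

lemma evalB {N : ℕ} (s : Finset (Fin N)) (g : Fin N → Fin N) (x l : Fin N) :
    (∑ i ∈ s, Finsupp.single ((i, g i) : Fin N × Fin N) (1 : ℕ)) (x, l) =
      if x ∈ s ∧ g x = l then 1 else 0 := by
  rw [Finsupp.finset_sum_apply]
  have h : ∀ i, (Finsupp.single ((i, g i) : Fin N × Fin N) (1 : ℕ)) (x, l)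
      = if i = x then (if g x = l then 1 else 0) else 0 := by
    intro i
    rw [Finsupp.single_apply]
    by_cases hix : i = x
    · subst hix; simp [Prod.ext_iff, eq_comm]
    · simp [Prod.ext_iff, hix]
  simp_rw [h]
  rw [Finset.sum_ite_eq' s x, ite_and]

lemma ite_one_zero_eq_iff {A B : Prop} [Decidable A] [Decidable B] :
    ((if A then (1:ℕ) else 0) = if B then 1 else 0) ↔ (A ↔ B) := by
  by_cases hA : A <;> by_cases hB : B <;> simp [hA, hB]

lemma perm_eq_of_eq_off_point {N : ℕ} (π ρ : Equiv.Perm (Fin N)) (c : Fin N)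
    (h : ∀ l, l ≠ c → π l = ρ l) : π c = ρ c := by
  have h1 : π (π⁻¹ (ρ c)) = ρ c := Equiv.Perm.apply_inv_self π _
  by_cases hc : π⁻¹ (ρ c) = c
  · calc π c = π (π⁻¹ (ρ c)) := by rw [hc]
      _ = ρ c := h1
  · exact absurd (ρ.injective (by rw [← h _ hc, h1])) hc

lemma coeff_det_updateRow {n : ℕ} (σ : Equiv.Perm (Fin (n + 2))) (a b : Fin (n + 2))
    (π₀ : Equiv.Perm (Fin (n + 2)))
    (hchar : ∀ π : Equiv.Perm (Fin (n + 2)),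
      (π b = a ∧ ∀ x l : Fin (n + 2),
        (((l ≠ b ∧ ¬(π l = 0 ∨ l = 0)) ∧ π l = x) ↔ ((x ≠ 0 ∧ σ x ≠ 0) ∧ σ x = l))) ↔ π = π₀) :
    MvPolynomial.coeff
      (∑ k ∈ Finset.univ.filter (fun k : Fin (n + 2) => k ≠ 0 ∧ σ k ≠ 0),
        Finsupp.single (k, σ k) 1)
      (((Matrix.of fun k l : Fin (n + 2) =>
          if k = 0 ∨ l = 0 then (1 : MvPolynomial (Fin (n + 2) × Fin (n + 2)) ℤ)
          else MvPolynomial.X (k, l)).updateRow a (Pi.single b 1)).det)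
    = (Equiv.Perm.sign π₀ : ℤ) := by
  classical
  set P : Matrix (Fin (n+2)) (Fin (n+2)) (MvPolynomial (Fin (n + 2) × Fin (n + 2)) ℤ) :=
    Matrix.of fun k l : Fin (n + 2) =>
      if k = 0 ∨ l = 0 then (1 : MvPolynomial (Fin (n + 2) × Fin (n + 2)) ℤ)
      else MvPolynomial.X (k, l) with hP
  set M := P.updateRow a (Pi.single b 1) with hM
  set m : (Fin (n+2) × Fin (n+2)) →₀ ℕ :=
    ∑ k ∈ Finset.univ.filter (fun k : Fin (n + 2) => k ≠ 0 ∧ σ k ≠ 0),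
      Finsupp.single (k, σ k) 1 with hm
  have key : ∀ π : Equiv.Perm (Fin (n+2)),
      MvPolynomial.coeff m (∏ i, M (π i) i) =
        if (π b = a ∧ ∀ x l : Fin (n + 2),
          (((l ≠ b ∧ ¬(π l = 0 ∨ l = 0)) ∧ π l = x) ↔ ((x ≠ 0 ∧ σ x ≠ 0) ∧ σ x = l)))
        then 1 else 0 := by
    intro π
    by_cases hb : π b = a
    · -- the product is a monomial
      have hprod : (∏ i, M (π i) i) =
          ∏ i ∈ Finset.univ.filter (fun i => i ≠ b ∧ ¬(π i = 0 ∨ i = 0)),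
            MvPolynomial.X ((π i, i) : Fin (n+2) × Fin (n+2)) := by
        rw [Finset.prod_filter]
        refine Finset.prod_congr rfl fun i _ => ?_
        by_cases hib : i = b
        · subst hib
          rw [if_neg (by simp)]
          simp [hM, hb, Matrix.updateRow_self]
        · have hπa : π i ≠ a := fun h => hib (π.injective (h.trans hb.symm))
          rw [hM, Matrix.updateRow_ne hπa]
          by_cases hc : π i = 0 ∨ i = 0
          · rw [if_neg (by simp [hib, hc]), hP]
            simp [Matrix.of_apply, hc]
          · rw [if_pos ⟨hib, hc⟩, hP]
            simp only [Matrix.of_apply]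
            rw [if_neg hc]
      rw [hprod, prod_X_eq_monomial, MvPolynomial.coeff_monomial]
      congr 1
      rw [eq_iff_iff]
      constructor
      · intro hD
        refine ⟨hb, fun x l => ?_⟩
        have := DFunLike.congr_fun hD (x, l)
        rw [evalA, hm, evalB] at this
        rw [ite_one_zero_eq_iff] at this
        constructor
        · rintro ⟨h1, h2⟩
          have h3 := this.1 ⟨by simp only [Finset.mem_filter, Finset.mem_univ, true_and]; tauto, h2⟩
          simp only [Finset.mem_filter, Finset.mem_univ, true_and] at h3
          tauto
        · rintro ⟨h1, h2⟩
          have h3 := this.2 ⟨by simp only [Finset.mem_filter, Finset.mem_univ, true_and]; tauto, h2⟩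
          simp only [Finset.mem_filter, Finset.mem_univ, true_and] at h3
          tauto
      · rintro ⟨-, hC⟩
        ext p
        obtain ⟨x, l⟩ := p
        rw [evalA, hm, evalB, ite_one_zero_eq_iff]
        constructor
        · rintro ⟨h1, h2⟩
          simp only [Finset.mem_filter, Finset.mem_univ, true_and] at h1
          have h3 := (hC x l).1 ⟨h1, h2⟩
          refine ⟨by simp only [Finset.mem_filter, Finset.mem_univ, true_and]; tauto, h3.2⟩
        · rintro ⟨h1, h2⟩
          simp only [Finset.mem_filter, Finset.mem_univ, true_and] at h1
          have h3 := (hC x l).2 ⟨h1, h2⟩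
          refine ⟨by simp only [Finset.mem_filter, Finset.mem_univ, true_and]; tauto, h3.2⟩
    · -- a factor is zero
      rw [if_neg (fun h => hb h.1)]
      have hzero : (∏ i, M (π i) i) = 0 := by
        apply Finset.prod_eq_zero (Finset.mem_univ (π⁻¹ a))
        rw [hM]
        have : π (π⁻¹ a) = a := Equiv.Perm.apply_inv_self π a
        rw [this, Matrix.updateRow_self]
        have hne : π⁻¹ a ≠ b := by
          intro h
          exact hb (by rw [← h]; exact this)
        rw [Pi.single_eq_of_ne hne]
      rw [hzero, MvPolynomial.coeff_zero]
  rw [Matrix.det_apply']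
  rw [MvPolynomial.coeff_sum]
  rw [Finset.sum_eq_single π₀]
  · simp_rw [← zsmul_eq_mul]
    rw [MvPolynomial.coeff_smul, key, if_pos ((hchar π₀).2 rfl)]
    simp
  · intro π _ hπ
    simp_rw [← zsmul_eq_mul]
    rw [MvPolynomial.coeff_smul, key, if_neg (fun h => hπ ((hchar π).1 h))]
    simp
  · intro h
    exact absurd (Finset.mem_univ π₀) h

/-- Let `P` be the generic `(n+2) × (n+2)` matrix over `ℤ[X_{k,l}]` whose
entries in the first row and first column are `1` and whose other entries are
the variables `X_{k,l}`.  Let `σ` be a permutation with `σ 0 ≠ 0` and set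
`t = σ⁻¹ 0`.  Then the coefficient of the monomial
`m_σ = ∏_{k ≠ 0, σ k ≠ 0} X_{k, σ k}` in
`(-1)^{0 + σ 0} det P⟨0, σ 0⟩ + (-1)^{t + 0} det P⟨t, 0⟩ +
 (-1)^{t + σ 0} det P⟨t, σ 0⟩` equals `sign σ`, where `P⟨a, b⟩` is the minor
of `P` obtained by deleting row `a` and column `b`.  (These are the cofactor
signs `(-1)^{1+σ(1)}`, `(-1)^{t+1}`, `(-1)^{t+σ(1)}` of the 1-indexed
statement.) -/
theorem coeff_three_cofactors_eq_sign (n : ℕ) (σ : Equiv.Perm (Fin (n + 2)))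
    (hσ : σ 0 ≠ 0) (t : Fin (n + 2)) (ht : t = σ⁻¹ 0) :
    MvPolynomial.coeff
      (∑ k ∈ Finset.univ.filter (fun k : Fin (n + 2) => k ≠ 0 ∧ σ k ≠ 0),
        Finsupp.single (k, σ k) 1)
      (((-1 : MvPolynomial (Fin (n + 2) × Fin (n + 2)) ℤ) ^ ((0 : ℕ) + (σ 0 : ℕ)) *
          ((Matrix.of fun k l : Fin (n + 2) =>
              if k = 0 ∨ l = 0 then (1 : MvPolynomial (Fin (n + 2) × Fin (n + 2)) ℤ)
              else MvPolynomial.X (k, l)).submatrix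
            (Fin.succAbove 0) (Fin.succAbove (σ 0))).det)
        + ((-1 : MvPolynomial (Fin (n + 2) × Fin (n + 2)) ℤ) ^ ((t : ℕ) + (0 : ℕ)) *
          ((Matrix.of fun k l : Fin (n + 2) =>
              if k = 0 ∨ l = 0 then (1 : MvPolynomial (Fin (n + 2) × Fin (n + 2)) ℤ)
              else MvPolynomial.X (k, l)).submatrix
            (Fin.succAbove t) (Fin.succAbove 0)).det)
        + ((-1 : MvPolynomial (Fin (n + 2) × Fin (n + 2)) ℤ) ^ ((t : ℕ) + (σ 0 : ℕ)) *
          ((Matrix.of fun k l : Fin (n + 2) =>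
              if k = 0 ∨ l = 0 then (1 : MvPolynomial (Fin (n + 2) × Fin (n + 2)) ℤ)
              else MvPolynomial.X (k, l)).submatrix
            (Fin.succAbove t) (Fin.succAbove (σ 0))).det))
      = (Equiv.Perm.sign σ : ℤ) := by
  classical
  have hσt : σ t = 0 := by rw [ht]; exact Equiv.Perm.apply_inv_self σ 0
  have ht0 : t ≠ 0 := fun h => hσ (h ▸ hσt)
  have hinv0 : σ⁻¹ 0 = t := ht.symm
  -- basic fact: σ⁻¹ l = 0 ↔ l = σ 0
  have hinv_ne : ∀ l : Fin (n + 2), σ⁻¹ l ≠ 0 ↔ l ≠ σ 0 := by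
    intro l
    constructor
    · intro h hl; exact h (by rw [hl, Equiv.Perm.inv_apply_self])
    · intro h hl
      exact h (by rw [← Equiv.Perm.apply_inv_self σ l, hl])
  -- rewrite the three cofactor terms as determinants of row-replaced matrices
  have h1 : ((-1 : MvPolynomial (Fin (n + 2) × Fin (n + 2)) ℤ) ^ ((0 : ℕ) + (σ 0 : ℕ)) *
      ((Matrix.of fun k l : Fin (n + 2) =>
          if k = 0 ∨ l = 0 then (1 : MvPolynomial (Fin (n + 2) × Fin (n + 2)) ℤ)
          else MvPolynomial.X (k, l)).submatrix
        (Fin.succAbove 0) (Fin.succAbove (σ 0))).det)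
      = (((Matrix.of fun k l : Fin (n + 2) =>
          if k = 0 ∨ l = 0 then (1 : MvPolynomial (Fin (n + 2) × Fin (n + 2)) ℤ)
          else MvPolynomial.X (k, l)).updateRow 0 (Pi.single (σ 0) 1)).det) := by
    rw [← Matrix.adjugate_apply, Matrix.adjugate_fin_succ_eq_det_submatrix]
    norm_num
  have h2 : ((-1 : MvPolynomial (Fin (n + 2) × Fin (n + 2)) ℤ) ^ ((t : ℕ) + (0 : ℕ)) *
      ((Matrix.of fun k l : Fin (n + 2) =>
          if k = 0 ∨ l = 0 then (1 : MvPolynomial (Fin (n + 2) × Fin (n + 2)) ℤ)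
          else MvPolynomial.X (k, l)).submatrix
        (Fin.succAbove t) (Fin.succAbove 0)).det)
      = (((Matrix.of fun k l : Fin (n + 2) =>
          if k = 0 ∨ l = 0 then (1 : MvPolynomial (Fin (n + 2) × Fin (n + 2)) ℤ)
          else MvPolynomial.X (k, l)).updateRow t (Pi.single 0 1)).det) := by
    rw [← Matrix.adjugate_apply, Matrix.adjugate_fin_succ_eq_det_submatrix]
    norm_num
  have h3 : ((-1 : MvPolynomial (Fin (n + 2) × Fin (n + 2)) ℤ) ^ ((t : ℕ) + (σ 0 : ℕ)) *
      ((Matrix.of fun k l : Fin (n + 2) =>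
          if k = 0 ∨ l = 0 then (1 : MvPolynomial (Fin (n + 2) × Fin (n + 2)) ℤ)
          else MvPolynomial.X (k, l)).submatrix
        (Fin.succAbove t) (Fin.succAbove (σ 0))).det)
      = (((Matrix.of fun k l : Fin (n + 2) =>
          if k = 0 ∨ l = 0 then (1 : MvPolynomial (Fin (n + 2) × Fin (n + 2)) ℤ)
          else MvPolynomial.X (k, l)).updateRow t (Pi.single (σ 0) 1)).det) := by
    rw [← Matrix.adjugate_apply, Matrix.adjugate_fin_succ_eq_det_submatrix]
  rw [h1, h2, h3, MvPolynomial.coeff_add, MvPolynomial.coeff_add]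
  -- the three characterizations
  have hc1 : ∀ π : Equiv.Perm (Fin (n + 2)),
      (π (σ 0) = 0 ∧ ∀ x l : Fin (n + 2),
        (((l ≠ σ 0 ∧ ¬(π l = 0 ∨ l = 0)) ∧ π l = x) ↔ ((x ≠ 0 ∧ σ x ≠ 0) ∧ σ x = l))) ↔
      π = σ⁻¹ := by
    intro π
    constructor
    · rintro ⟨hb, hC⟩
      have hagree : ∀ l, l ≠ 0 → π l = σ⁻¹ l := by
        intro l hl
        by_cases hlσ : l = σ 0
        · rw [hlσ, hb, Equiv.Perm.inv_apply_self]
        · exact ((hC (σ⁻¹ l) l).2 ⟨⟨(hinv_ne l).2 hlσ,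
            by rw [Equiv.Perm.apply_inv_self σ]; exact hl⟩, Equiv.Perm.apply_inv_self σ l⟩).2
      refine Equiv.ext fun l => ?_
      by_cases hl : l = 0
      · rw [hl]; exact perm_eq_of_eq_off_point π σ⁻¹ 0 hagree
      · exact hagree l hl
    · rintro rfl
      refine ⟨Equiv.Perm.inv_apply_self σ 0, fun x l => ?_⟩
      constructor
      · rintro ⟨⟨h1, h2⟩, h3⟩
        push_neg at h2
        subst h3
        exact ⟨⟨h2.1, by rw [Equiv.Perm.apply_inv_self σ]; exact h2.2⟩, Equiv.Perm.apply_inv_self σ l⟩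
      · rintro ⟨⟨hx, hσx⟩, rfl⟩
        refine ⟨⟨?_, ?_⟩, Equiv.Perm.inv_apply_self σ x⟩
        · intro h; exact hx (σ.injective h)
        · push_neg
          refine ⟨by rw [Equiv.Perm.inv_apply_self σ]; exact hx, hσx⟩
  have hc2 : ∀ π : Equiv.Perm (Fin (n + 2)),
      (π 0 = t ∧ ∀ x l : Fin (n + 2),
        (((l ≠ 0 ∧ ¬(π l = 0 ∨ l = 0)) ∧ π l = x) ↔ ((x ≠ 0 ∧ σ x ≠ 0) ∧ σ x = l))) ↔
      π = σ⁻¹ := by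
    intro π
    constructor
    · rintro ⟨hb, hC⟩
      have hagree : ∀ l, l ≠ σ 0 → π l = σ⁻¹ l := by
        intro l hl
        by_cases hl0 : l = 0
        · rw [hl0, hb, hinv0]
        · exact ((hC (σ⁻¹ l) l).2 ⟨⟨(hinv_ne l).2 hl,
            by rw [Equiv.Perm.apply_inv_self σ]; exact hl0⟩, Equiv.Perm.apply_inv_self σ l⟩).2
      refine Equiv.ext fun l => ?_
      by_cases hl : l = σ 0
      · rw [hl]; exact perm_eq_of_eq_off_point π σ⁻¹ (σ 0) hagree
      · exact hagree l hl
    · rintro rfl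
      refine ⟨hinv0, fun x l => ?_⟩
      constructor
      · rintro ⟨⟨h1, h2⟩, h3⟩
        push_neg at h2
        subst h3
        exact ⟨⟨h2.1, by rw [Equiv.Perm.apply_inv_self σ]; exact h2.2⟩, Equiv.Perm.apply_inv_self σ l⟩
      · rintro ⟨⟨hx, hσx⟩, rfl⟩
        refine ⟨⟨hσx, ?_⟩, Equiv.Perm.inv_apply_self σ x⟩
        push_neg
        refine ⟨by rw [Equiv.Perm.inv_apply_self σ]; exact hx, hσx⟩
  have hc3 : ∀ π : Equiv.Perm (Fin (n + 2)),
      (π (σ 0) = t ∧ ∀ x l : Fin (n + 2),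
        (((l ≠ σ 0 ∧ ¬(π l = 0 ∨ l = 0)) ∧ π l = x) ↔ ((x ≠ 0 ∧ σ x ≠ 0) ∧ σ x = l))) ↔
      π = σ⁻¹ * Equiv.swap 0 (σ 0) := by
    intro π
    have hπ₀ : ∀ l : Fin (n + 2), (σ⁻¹ * Equiv.swap 0 (σ 0)) l = σ⁻¹ (Equiv.swap 0 (σ 0) l) :=
      fun l => rfl
    constructor
    · rintro ⟨hb, hC⟩
      have hagree : ∀ l, l ≠ 0 → π l = (σ⁻¹ * Equiv.swap 0 (σ 0)) l := by
        intro l hl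
        by_cases hlσ : l = σ 0
        · rw [hlσ, hb, hπ₀, Equiv.swap_apply_right, hinv0]
        · rw [hπ₀, Equiv.swap_apply_of_ne_of_ne hl hlσ]
          exact ((hC (σ⁻¹ l) l).2 ⟨⟨(hinv_ne l).2 hlσ,
            by rw [Equiv.Perm.apply_inv_self σ]; exact hl⟩, Equiv.Perm.apply_inv_self σ l⟩).2
      refine Equiv.ext fun l => ?_
      by_cases hl : l = 0
      · rw [hl]; exact perm_eq_of_eq_off_point π _ 0 hagree
      · exact hagree l hl
    · rintro rfl
      refine ⟨by rw [hπ₀, Equiv.swap_apply_right, hinv0], fun x l => ?_⟩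
      constructor
      · rintro ⟨⟨h1, h2⟩, h3⟩
        push_neg at h2
        rw [hπ₀, Equiv.swap_apply_of_ne_of_ne h2.2 h1] at h3
        subst h3
        refine ⟨⟨?_, by rw [Equiv.Perm.apply_inv_self σ]; exact h2.2⟩, Equiv.Perm.apply_inv_self σ l⟩
        exact (hinv_ne l).2 h1
      · rintro ⟨⟨hx, hσx⟩, rfl⟩
        have hl0 : σ x ≠ 0 := hσx
        have hlσ : σ x ≠ σ 0 := fun h => hx (σ.injective h)
        rw [hπ₀, Equiv.swap_apply_of_ne_of_ne hl0 hlσ]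
        refine ⟨⟨hlσ, ?_⟩, Equiv.Perm.inv_apply_self σ x⟩
        push_neg
        refine ⟨by rw [Equiv.Perm.inv_apply_self σ]; exact hx, hl0⟩
  rw [coeff_det_updateRow σ 0 (σ 0) σ⁻¹ hc1,
      coeff_det_updateRow σ t 0 σ⁻¹ hc2,
      coeff_det_updateRow σ t (σ 0) (σ⁻¹ * Equiv.swap 0 (σ 0)) hc3]
  rw [Equiv.Perm.sign_mul, Equiv.Perm.sign_inv, Equiv.Perm.sign_swap (Ne.symm hσ)]
  push_cast
  ring
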